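/- Let k be a field, G a group, and ρ : G → GL(V) a k-linear representation of G on a k-vector space V. Suppose there is a finite chain of G-invariant subspaces 0 = V_0 ⊆ V_1 ⊆ ⋯ ⊆ V_n = V such that the induced action of G on each successive quotient V_m / V_{m−1} is trivial. If every group homomorphism from G to the additive group (k, +) is trivial, then G acts trivially on V, i.e. ρ(g) = id_V for all g ∈ G. -/
import Mathlib

/-- If a representation `ρ` of a group `G` on a `k`-vector space `V` admits a finite chain of
`G`-invariant subspaces `0 = W 0 ⊆ W 1 ⊆ ⋯ ⊆ W n = V` on whose successive quotients `G` acts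
trivially, and if every group homomorphism from `G` to the additive group `(k, +)` is trivial,
then `G` acts trivially on `V`. -/
theorem trivial_of_filtration_by_trivials
    (k : Type*) [Field k] (V : Type*) [AddCommGroup V] [Module k V]
    (G : Type*) [Group G] (ρ : Representation k G V)
    (n : ℕ) (W : Fin (n + 1) → Submodule k V)
    (hmono : Monotone W) (h0 : W 0 = ⊥) (hlast : W (Fin.last n) = ⊤)
    (hinv : ∀ (g : G) (m : Fin (n + 1)), ∀ v ∈ W m, ρ g v ∈ W m)
    (htriv : ∀ (g : G) (m : Fin n), ∀ v ∈ W m.succ, ρ g v - v ∈ W m.castSucc)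
    (hhom : ∀ φ : G → k, (∀ g h : G, φ (g * h) = φ g + φ h) → ∀ g : G, φ g = 0) :
    ∀ (g : G) (v : V), ρ g v = v := by
  have key : ∀ m : Fin (n + 1), ∀ v ∈ W m, ∀ g : G, ρ g v = v := by
    intro m
    induction m using Fin.induction with
    | zero =>
      intro v hv g
      rw [h0, Submodule.mem_bot] at hv
      simp [hv]
    | succ m ih =>
      intro v hv g
      have hadd : ∀ g h : G, ρ (g * h) v - v = (ρ g v - v) + (ρ h v - v) := by
        intro g h
        have h1 : ρ h v - v ∈ W m.castSucc := htriv h m v hv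
        have h2 : ρ g (ρ h v - v) = ρ h v - v := ih _ h1 g
        have h3 : ρ (g * h) v = ρ g (ρ h v) := by
          rw [map_mul]; rfl
        have h4 : ρ g (ρ h v) = ρ g (ρ h v - v) + ρ g v := by
          rw [map_sub]; abel
        rw [h3, h4, h2]; abel
      have hzero : ρ g v - v = 0 := by
        rw [← Module.forall_dual_apply_eq_zero_iff k]
        intro φ
        have := hhom (fun g => φ (ρ g v - v)) (by intro a b; show φ _ = φ _ + φ _; rw [hadd, map_add]) g
        simpa using this
      exact sub_eq_zero.mp hzero
  intro g v
  exact key (Fin.last n) v (by rw [hlast]; trivial) g
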